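/- (Gallai–Hasse–Roy–Vitaver) Let G be a finite undirected graph with chromatic number k. Then for every orientation of the edges of G, the resulting directed graph contains a directed path of edge-length at least k − 1. -/

import Mathlib

open Relation

lemma chain'_reflTransGen {α : Type*} {r : α → α → Prop} :
    ∀ {l : List α} {a b : α}, l.Chain' r → l.head? = some a → l.getLast? = some b →
      Relation.ReflTransGen r a b := by
  intro l
  induction l with
  | nil => intro a b _ h; simp at h
  | cons x t ih =>
    intro a b hc hh hl
    simp at hh; subst hh
    cases t with
    | nil => simp at hl; subst hl; exact .refl
    | cons y t' =>
      rw [show List.Chain' r (x :: y :: t') ↔ _ from List.isChain_cons_cons] at hc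
      have h1 : Relation.ReflTransGen r y b :=
        ih hc.2 rfl (by rwa [List.getLast?_cons_cons] at hl)
      exact Relation.ReflTransGen.head hc.1 h1

lemma transGen_insert {α : Type*} {r : α → α → Prop} {u v : α} {x y : α}
    (h : Relation.TransGen (fun a b => r a b ∨ (a = u ∧ b = v)) x y) :
    Relation.TransGen r x y ∨
      (Relation.ReflTransGen r x u ∧ Relation.ReflTransGen r v y) := by
  induction h with
  | single h =>
    rcases h with h | ⟨rfl, rfl⟩
    · exact Or.inl (.single h)
    · exact Or.inr ⟨.refl, .refl⟩
  | tail _ hstep ih =>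
    rename_i b c _
    rcases hstep with hr | ⟨rfl, rfl⟩
    · rcases ih with h1 | ⟨h1, h2⟩
      · exact Or.inl (h1.tail hr)
      · exact Or.inr ⟨h1, h2.tail hr⟩
    · rcases ih with h1 | ⟨h1, _⟩
      · exact Or.inr ⟨h1.to_reflTransGen, .refl⟩
      · exact Or.inr ⟨h1, .refl⟩

/-- Gallai–Hasse–Roy–Vitaver: if `G` is a finite undirected graph with chromatic number `k`,
then for every orientation `o` of the edges of `G`, the resulting directed graph contains a
directed path of edge-length at least `k - 1`, i.e. a list of `k` (or more) distinct
vertices with consecutive directed edges. -/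
theorem gallai_hasse_roy_vitaver {V : Type*} [Fintype V] (G : SimpleGraph V) (k : ℕ)
    (hk : G.chromaticNumber = k) (o : V → V → Prop)
    (ho_sub : ∀ u v, o u v → G.Adj u v)
    (ho_orient : ∀ u v, G.Adj u v → (o u v ↔ ¬ o v u)) :
    ∃ l : List V, l.Nodup ∧ l.Chain' o ∧ k ≤ l.length := by
  classical
  rcases Nat.eq_zero_or_pos k with rfl | hk1
  · exact ⟨[], List.nodup_nil, List.isChain_nil, by simp⟩
  by_contra hcon
  push_neg at hcon
  have hshort : ∀ l : List V, l.Nodup → l.Chain' o → l.length ≤ k - 1 := by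
    intro l h1 h2
    have := hcon l h1 h2
    omega
  -- V is nonempty (otherwise chromatic number 0 < k)
  have hne : Nonempty V := by
    by_contra hemp
    rw [not_nonempty_iff] at hemp
    have : G.Colorable 0 := ⟨⟨fun v => isEmptyElim v, fun {a} => isEmptyElim a⟩⟩
    have h0 := this.chromaticNumber_le
    rw [hk] at h0
    simp at h0
    omega
  -- the set of "good" (acyclic sub-orientation) arc sets
  set Good : Finset (V × V) → Prop := fun s =>
    (∀ p ∈ s, o p.1 p.2) ∧ ∀ w : V, ¬ Relation.TransGen (fun a b => (a, b) ∈ s) w w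
    with hGood
  have hGoodEmpty : Good ∅ := by
    constructor
    · simp
    · intro w hw
      cases hw with
      | single h => simp at h
      | tail _ h => simp at h
  obtain ⟨s, hsmem, hsmax⟩ :=
    Finset.exists_max_image (Finset.univ.filter Good) Finset.card
      ⟨∅, by simpa using hGoodEmpty⟩
  rw [Finset.mem_filter] at hsmem
  have hsGood : Good s := hsmem.2
  set r : V → V → Prop := fun a b => (a, b) ∈ s with hr
  have hro : ∀ a b, r a b → o a b := fun a b hab => hsGood.1 _ hab
  have hacyc : ∀ w : V, ¬ Relation.TransGen r w w := hsGood.2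
  -- the coloring function: longest r-chain ending at a vertex
  set N := Fintype.card V with hN
  set P : V → ℕ → Prop := fun x n =>
    ∃ l : List V, l.Nodup ∧ l.Chain' r ∧ l.getLast? = some x ∧ l.length = n with hP
  set f : V → ℕ := fun x => Nat.findGreatest (P x) N with hf
  have hP1 : ∀ x, P x 1 := by
    intro x
    exact ⟨[x], by simp, List.isChain_singleton x, by simp, by simp⟩
  have hf1 : ∀ x, 1 ≤ f x := by
    intro x
    exact Nat.le_findGreatest (by simpa [hN] using Nat.succ_le_of_lt (Fintype.card_pos (α := V))) (hP1 x)
  have hfP : ∀ x, P x (f x) := by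
    intro x
    exact Nat.findGreatest_spec (by simpa [hN] using Nat.succ_le_of_lt (Fintype.card_pos (α := V))) (hP1 x)
  -- f strictly increases along r
  have hstep : ∀ x y, r x y → f x < f y := by
    intro x y hxy
    obtain ⟨l, hnd, hch, hlast, hlen⟩ := hfP x
    have hlne : l ≠ [] := by rintro rfl; simp at hlast
    have hy : y ∉ l := by
      intro hyl
      obtain ⟨l₁, l₂, rfl⟩ := List.append_of_mem hyl
      have hsuf : (y :: l₂).Chain' r := hch.suffix ⟨l₁, rfl⟩
      have hlast2 : (y :: l₂).getLast? = some x := by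
        rwa [List.getLast?_append_cons] at hlast
      have hyx : Relation.ReflTransGen r y x := chain'_reflTransGen hsuf rfl hlast2
      exact hacyc y (Relation.TransGen.tail' hyx hxy)
    have hchain2 : (l ++ [y]).Chain' r := by
      rw [show (l ++ [y]).Chain' r ↔ _ from List.isChain_append]
      refine ⟨hch, by simp, ?_⟩
      intro a ha b hb
      simp at hb; subst hb
      rw [hlast] at ha
      simp at ha; subst ha
      exact hxy
    have hnd2 : (l ++ [y]).Nodup := by
      rw [List.nodup_append]
      exact ⟨hnd, by simp, by simp; intro a ha hay; exact hy (hay ▸ ha)⟩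
    have hle : f x + 1 ≤ N := by
      have := hnd2.length_le_card
      simpa [hlen] using this
    have : P y (f x + 1) := ⟨l ++ [y], hnd2, hchain2, by simp, by simp [hlen]⟩
    exact Nat.lt_of_lt_of_le (Nat.lt_succ_self _) (Nat.le_findGreatest hle this)
  have hmono : ∀ x y, Relation.TransGen r x y → f x < f y := by
    intro x y h
    induction h with
    | single h => exact hstep _ _ h
    | tail _ h ih => exact lt_trans ih (hstep _ _ h)
  have hrmono : ∀ x y, Relation.ReflTransGen r x y → f x ≤ f y := by
    intro x y h
    rcases (reflTransGen_iff_eq_or_transGen.mp h) with rfl | h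
    · exact le_rfl
    · exact le_of_lt (hmono _ _ h)
  -- key: for any oriented edge, f differs
  have hdiff : ∀ u v, o u v → f u ≠ f v := by
    intro u v huv
    by_cases hrs : r u v
    · exact ne_of_lt (hstep _ _ hrs)
    · -- maximality: adding (u,v) creates a cycle
      have hnots : (u, v) ∉ s := hrs
      have hbad : ¬ Good (insert (u, v) s) := by
        intro hg
        have := hsmax _ (by simpa using hg)
        rw [Finset.card_insert_of_notMem hnots] at this
        omega
      have hsub : ∀ p ∈ insert (u, v) s, o p.1 p.2 := by
        intro p hp
        rcases Finset.mem_insert.mp hp with rfl | hp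
        · exact huv
        · exact hsGood.1 _ hp
      obtain ⟨w, hw⟩ : ∃ w, Relation.TransGen (fun a b => (a, b) ∈ insert (u, v) s) w w := by
        by_contra hno
        push_neg at hno
        exact hbad ⟨hsub, hno⟩
      have hw' : Relation.TransGen (fun a b => r a b ∨ (a = u ∧ b = v)) w w := by
        refine Relation.TransGen.mono ?_ _ _ hw
        intro a b hab
        rcases Finset.mem_insert.mp hab with h | h
        · exact Or.inr ⟨congrArg Prod.fst h, congrArg Prod.snd h⟩
        · exact Or.inl h
      rcases transGen_insert hw' with h | ⟨h1, h2⟩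
      · exact absurd h (hacyc w)
      · have hvu : Relation.ReflTransGen r v u := h2.trans h1
        have : f v ≤ f u := hrmono _ _ hvu
        have hne' : u ≠ v := (ho_sub u v huv).ne
        rcases reflTransGen_iff_eq_or_transGen.mp hvu with h | h
        · exact absurd h.symm hne'.symm
        · exact (ne_of_lt (hmono _ _ h)).symm
  -- f − 1 gives a (k−1)-coloring
  have hbound : ∀ x, f x ≤ k - 1 := by
    intro x
    obtain ⟨l, hnd, hch, _, hlen⟩ := hfP x
    have : l.Chain' o := hch.imp hro
    have := hshort l hnd this
    omega
  have hcol : G.Colorable (k - 1) := by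
    refine ⟨⟨fun v => ⟨f v - 1, ?_⟩, ?_⟩⟩
    · have := hf1 v; have := hbound v; omega
    · intro a b hab hfab
      simp only [Fin.mk.injEq] at hfab
      have hne' : f a ≠ f b := by
        by_cases hoab : o a b
        · exact hdiff _ _ hoab
        · have : o b a := ((ho_orient b a hab.symm).mpr) (by simpa using hoab)
          exact (hdiff _ _ this).symm
      have := hf1 a; have := hf1 b
      omega
  have hle := hcol.chromaticNumber_le
  rw [hk] at hle
  have : (k : ℕ∞) ≤ (k - 1 : ℕ) := hle
  rw [Nat.cast_le] at this
  omega
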